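/- Let (V; ρ, θ, D, R_V) be a representation of a modified Rota-Baxter Lie-Yamaguti algebra (L,[-,-],{-,-,-},R). Then for all x, y in L and u in V the identity (4.3) holds: D(Rx,Ry)R_V u = R_V(D(Rx,Ry)u + D(Rx,y)R_V u + D(x,Ry)R_V u + D(x,y)u) - D(Rx,y)u - D(x,y)R_V u - D(x,Ry)u. -/
import Mathlib


/-- A Lie-Yamaguti algebra: bilinear bracket `br`, trilinear bracket `tr`,
satisfying (LY1)-(LY6). -/
structure LieYamaguti (K : Type*) (L : Type*) [Field K] [AddCommGroup L] [Module K L] where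
  br : L →ₗ[K] L →ₗ[K] L
  tr : L →ₗ[K] L →ₗ[K] L →ₗ[K] L
  ly1 : ∀ x y, br x y = - br y x
  ly2 : ∀ x y z, tr x y z = - tr y x z
  ly3 : ∀ x y z,
    br (br x y) z + br (br y z) x + br (br z x) y + tr x y z + tr y z x + tr z x y = 0
  ly4 : ∀ x y z a, tr (br x y) z a + tr (br z x) y a + tr (br y z) x a = 0
  ly5 : ∀ a b x y, tr a b (br x y) = br (tr a b x) y + br x (tr a b y)
  ly6 : ∀ a b x y z,
    tr a b (tr x y z) = tr (tr a b x) y z + tr x (tr a b y) z + tr x y (tr a b z)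

/-- A modified Rota-Baxter operator on a Lie-Yamaguti algebra. -/
def IsMRB {K L : Type*} [Field K] [AddCommGroup L] [Module K L]
    (A : LieYamaguti K L) (R : L →ₗ[K] L) : Prop :=
  (∀ x y, A.br (R x) (R y) = R (A.br (R x) y + A.br x (R y)) - A.br x y) ∧
  (∀ x y z, A.tr (R x) (R y) (R z) =
      R (A.tr x (R y) (R z) + A.tr (R x) y (R z) + A.tr (R x) (R y) z + A.tr x y z)
      - A.tr (R x) y z - A.tr x (R y) z - A.tr x y (R z))

/-- A representation of a Lie-Yamaguti algebra on `V`, axioms (R1)-(R7). -/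
structure LYRep (K L V : Type*) [Field K] [AddCommGroup L] [Module K L]
    [AddCommGroup V] [Module K V] (A : LieYamaguti K L) where
  ρ : L →ₗ[K] Module.End K V
  θ : L →ₗ[K] L →ₗ[K] Module.End K V
  D : L →ₗ[K] L →ₗ[K] Module.End K V
  r1 : ∀ x y, D x y - θ y x + θ x y + ρ (A.br x y) - ρ x * ρ y + ρ y * ρ x = 0
  r2 : ∀ x y z, D (A.br x y) z + D (A.br y z) x + D (A.br z x) y = 0
  r3 : ∀ x y a, θ (A.br x y) a = θ x a * ρ y - θ y a * ρ x
  r4 : ∀ a b x, D a b * ρ x = ρ x * D a b + ρ (A.tr a b x)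
  r5 : ∀ x a b, θ x (A.br a b) = ρ a * θ x b - ρ b * θ x a
  r6 : ∀ a b x y, D a b * θ x y = θ x y * D a b + θ (A.tr a b x) y + θ x (A.tr a b y)
  r7 : ∀ a x y z, θ a (A.tr x y z) = θ y z * θ a x - θ x z * θ a y + D x y * θ a z

/-- A representation of a modified Rota-Baxter Lie-Yamaguti algebra `(L, R)`:
a representation of the underlying Lie-Yamaguti algebra together with a linear map
`RV` satisfying (4.1) and (4.2). -/
structure MRBRep (K L V : Type*) [Field K] [AddCommGroup L] [Module K L]
    [AddCommGroup V] [Module K V] (A : LieYamaguti K L) (R : L →ₗ[K] L)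
    extends LYRep K L V A where
  RV : V →ₗ[K] V
  c41 : ∀ (x : L) (u : V), ρ (R x) (RV u) = RV (ρ (R x) u + ρ x (RV u)) - ρ x u
  c42 : ∀ (x y : L) (u : V),
    θ (R x) (R y) (RV u) =
      RV (θ (R x) (R y) u + θ (R x) y (RV u) + θ x (R y) (RV u) + θ x y u)
      - θ (R x) y u - θ x y (RV u) - θ x (R y) u

/-- In any representation of a modified Rota-Baxter Lie-Yamaguti algebra, identity (4.3)
holds for `D`. -/
theorem mrbRep_D_compat (K L V : Type*) [Field K] [CharZero K]
    [AddCommGroup L] [Module K L] [AddCommGroup V] [Module K V]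
    (A : LieYamaguti K L) (R : L →ₗ[K] L) (hR : IsMRB A R)
    (rep : MRBRep K L V A R) :
    ∀ (x y : L) (u : V),
      rep.D (R x) (R y) (rep.RV u)
        = rep.RV (rep.D (R x) (R y) u + rep.D (R x) y (rep.RV u)
            + rep.D x (R y) (rep.RV u) + rep.D x y u)
          - rep.D (R x) y u - rep.D x y (rep.RV u) - rep.D x (R y) u := by
  intro x y u
  -- unfold `D` via (R1)
  have hD : ∀ a b (v : V), rep.D a b v
      = rep.θ b a v - rep.θ a b v - rep.ρ (A.br a b) v
        + rep.ρ a (rep.ρ b v) - rep.ρ b (rep.ρ a v) := by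
    intro a b v
    have h := congrArg (fun f : Module.End K V => f v) (rep.r1 a b)
    simp only [LinearMap.sub_apply, LinearMap.add_apply, Module.End.mul_apply,
      LinearMap.zero_apply] at h
    linear_combination (norm := abel) h
  -- quadratic part
  have Q : ∀ a b : L, rep.ρ (R a) (rep.ρ (R b) (rep.RV u))
      = rep.RV (rep.ρ (R a) (rep.ρ (R b) u)) + rep.RV (rep.ρ (R a) (rep.ρ b (rep.RV u)))
          + rep.RV (rep.ρ a (rep.ρ (R b) (rep.RV u))) + rep.RV (rep.ρ a (rep.ρ b u))
        - rep.ρ a (rep.ρ (R b) u) - rep.ρ a (rep.ρ b (rep.RV u))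
        - rep.ρ (R a) (rep.ρ b u) := by
    intro a b
    have h1 := rep.c41 b u
    have h1' : rep.RV (rep.ρ (R b) u + rep.ρ b (rep.RV u))
        = rep.ρ (R b) (rep.RV u) + rep.ρ b u := by rw [h1]; abel
    have h2 := rep.c41 a (rep.ρ (R b) u + rep.ρ b (rep.RV u))
    calc rep.ρ (R a) (rep.ρ (R b) (rep.RV u))
        = rep.ρ (R a) (rep.RV (rep.ρ (R b) u + rep.ρ b (rep.RV u)) - rep.ρ b u) := by
          rw [h1]
      _ = rep.ρ (R a) (rep.RV (rep.ρ (R b) u + rep.ρ b (rep.RV u)))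
            - rep.ρ (R a) (rep.ρ b u) := by rw [map_sub]
      _ = _ := by
          rw [h2, h1']
          simp only [map_add]
          abel
  -- bracket part
  have hw : R (A.br (R x) y + A.br x (R y)) = A.br (R x) (R y) + A.br x y := by
    rw [hR.1 x y]; abel
  have H3 := rep.c41 (A.br (R x) y + A.br x (R y)) u
  rw [hw] at H3
  simp only [map_add, LinearMap.add_apply] at H3
  -- theta parts
  have H1 := rep.c42 y x u
  have H2 := rep.c42 x y u
  simp only [map_add] at H1 H2
  simp only [hD, map_add, map_sub]
  linear_combination (norm := abel) H1 - H2 - H3 + Q x y - Q y x
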